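/- There exists a 2-cocycle c : Γ × Γ → k^× such that c(α,β) = 1 for all α ∈ S and β ∈ Γ, and c(α,β)c(β,α)^{-1} = σ(α,β) for all α, β ∈ Γ. -/

import Mathlib

section aux
variable {k : Type*} [Field k] {n : ℕ} (σ : (Fin n → ℤ) → (Fin n → ℤ) → kˣ)

private lemma aux_hom₁ (hmul₁ : ∀ α β γ, σ (α + β) γ = σ α γ * σ β γ) (w : Fin n → ℤ) :
    ∃ F : (Fin n → ℤ) →+ Additive kˣ, ∀ v, F v = Additive.ofMul (σ v w) :=
  ⟨AddMonoidHom.mk' (fun v => Additive.ofMul (σ v w))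
    (fun a b => by show Additive.ofMul (σ (a+b) w) = _; rw [hmul₁, ofMul_mul]), fun v => rfl⟩

private lemma aux_hom₂ (hmul₂ : ∀ α β γ, σ α (β + γ) = σ α β * σ α γ) (w : Fin n → ℤ) :
    ∃ F : (Fin n → ℤ) →+ Additive kˣ, ∀ v, F v = Additive.ofMul (σ w v) :=
  ⟨AddMonoidHom.mk' (fun v => Additive.ofMul (σ w v))
    (fun a b => by show Additive.ofMul (σ w (a+b)) = _; rw [hmul₂, ofMul_mul]), fun v => rfl⟩

private lemma aux_zsmul₁ (hmul₁ : ∀ α β γ, σ (α + β) γ = σ α γ * σ β γ)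
    (z : ℤ) (v w : Fin n → ℤ) : σ (z • v) w = σ v w ^ z := by
  obtain ⟨F, hF⟩ := aux_hom₁ σ hmul₁ w
  have := F.map_zsmul z v
  rw [hF, hF] at this
  simpa using congrArg Additive.toMul this

private lemma aux_zsmul₂ (hmul₂ : ∀ α β γ, σ α (β + γ) = σ α β * σ α γ)
    (z : ℤ) (v w : Fin n → ℤ) : σ w (z • v) = σ w v ^ z := by
  obtain ⟨F, hF⟩ := aux_hom₂ σ hmul₂ w
  have := F.map_zsmul z v
  rw [hF, hF] at this
  simpa using congrArg Additive.toMul this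

private lemma aux_sum₁ (hmul₁ : ∀ α β γ, σ (α + β) γ = σ α γ * σ β γ)
    (w : Fin n → ℤ) (v : Fin n → (Fin n → ℤ)) :
    σ (∑ i, v i) w = ∏ i, σ (v i) w := by
  obtain ⟨F, hF⟩ := aux_hom₁ σ hmul₁ w
  have := map_sum F v Finset.univ
  rw [hF] at this
  have h2 := congrArg Additive.toMul this
  simpa [hF] using h2

private lemma aux_sum₂ (hmul₂ : ∀ α β γ, σ α (β + γ) = σ α β * σ α γ)
    (w : Fin n → ℤ) (v : Fin n → (Fin n → ℤ)) :
    σ w (∑ i, v i) = ∏ i, σ w (v i) := by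
  obtain ⟨F, hF⟩ := aux_hom₂ σ hmul₂ w
  have := map_sum F v Finset.univ
  rw [hF] at this
  have h2 := congrArg Additive.toMul this
  simpa [hF] using h2

private lemma aux_skew (halt : ∀ α, σ α α = 1)
    (hmul₁ : ∀ α β γ, σ (α + β) γ = σ α γ * σ β γ)
    (hmul₂ : ∀ α β γ, σ α (β + γ) = σ α β * σ α γ)
    (u v : Fin n → ℤ) : σ v u = (σ u v)⁻¹ := by
  have h := halt (u + v)
  rw [hmul₁, hmul₂, hmul₂, halt, halt, one_mul, mul_one] at h
  rw [eq_inv_iff_mul_eq_one, mul_comm]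
  exact h

end aux

/-- there is a 2-cocycle `c` on `Γ = ℤⁿ` with values in `kˣ` which is
trivial on `S × Γ` (where `S = rad σ`) and satisfies `c(α,β)c(β,α)⁻¹ = σ(α,β)`. -/
theorem stmt_17 {k : Type*} [Field k] {n : ℕ}
    (σ : (Fin n → ℤ) → (Fin n → ℤ) → kˣ)
    (halt : ∀ α, σ α α = 1)
    (hmul₁ : ∀ α β γ, σ (α + β) γ = σ α γ * σ β γ)
    (hmul₂ : ∀ α β γ, σ α (β + γ) = σ α β * σ α γ) :
    ∃ c : (Fin n → ℤ) → (Fin n → ℤ) → kˣ,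
      (∀ α β γ, c α β * c (α + β) γ = c β γ * c α (β + γ)) ∧
      (∀ α, (∀ γ, σ α γ = 1) → ∀ β, c α β = 1) ∧
      (∀ α β, c α β * (c β α)⁻¹ = σ α β) := by
  classical
  have hzero₁ : ∀ γ, σ 0 γ = 1 := by
    intro γ
    have h := hmul₁ 0 0 γ
    rw [add_zero] at h
    exact (right_eq_mul.mp h)
  -- the radical as a submodule
  let S : Submodule ℤ (Fin n → ℤ) :=
    { carrier := {α | ∀ γ, σ α γ = 1}
      add_mem' := fun {a b} ha hb γ => by rw [hmul₁, ha, hb, mul_one]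
      zero_mem' := hzero₁
      smul_mem' := fun z v hv γ => by
        rw [aux_zsmul₁ σ hmul₁, hv, one_zpow] }
  obtain ⟨m, ⟨bM, bN, f, a, snf⟩⟩ := S.smithNormalForm (Pi.basisFun ℤ (Fin n))
  -- the 2-cochain
  set c : (Fin n → ℤ) → (Fin n → ℤ) → kˣ := fun α β =>
    ∏ i : Fin n, ∏ j : Fin n,
      if j < i then σ (bM i) (bM j) ^ (bM.repr α i * bM.repr β j) else 1 with hc
  -- bimultiplicativity
  have hbm₁ : ∀ α β γ, c (α + β) γ = c α γ * c β γ := by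
    intro α β γ
    rw [hc]
    simp only [map_add, Finsupp.add_apply, add_mul, zpow_add]
    rw [← Finset.prod_mul_distrib]
    refine Finset.prod_congr rfl fun i _ => ?_
    rw [← Finset.prod_mul_distrib]
    refine Finset.prod_congr rfl fun j _ => ?_
    split <;> simp
  have hbm₂ : ∀ α β γ, c α (β + γ) = c α β * c α γ := by
    intro α β γ
    rw [hc]
    simp only [map_add, Finsupp.add_apply, mul_add, zpow_add]
    rw [← Finset.prod_mul_distrib]
    refine Finset.prod_congr rfl fun i _ => ?_
    rw [← Finset.prod_mul_distrib]
    refine Finset.prod_congr rfl fun j _ => ?_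
    split <;> simp
  -- expansion of σ in coordinates
  have hexp : ∀ α β, σ α β =
      ∏ i : Fin n, ∏ j : Fin n, σ (bM i) (bM j) ^ (bM.repr α i * bM.repr β j) := by
    intro α β
    conv_lhs => rw [← bM.sum_repr α]
    rw [aux_sum₁ σ hmul₁]
    refine Finset.prod_congr rfl fun i _ => ?_
    rw [aux_zsmul₁ σ hmul₁]
    conv_lhs => rw [← bM.sum_repr β, aux_sum₂ σ hmul₂]
    rw [← Finset.prod_zpow]
    refine Finset.prod_congr rfl fun j _ => ?_
    rw [aux_zsmul₂ σ hmul₂, ← zpow_mul, mul_comm]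
  -- adaptedness: each coordinate piece of a radical element is in the radical
  have key : ∀ α, α ∈ S → ∀ i : Fin n, (bM.repr α i) • bM i ∈ S := by
    intro α hα i
    let L : (Fin n → ℤ) →ₗ[ℤ] (Fin n → ℤ) := (bM.coord i).smulRight (bM i)
    have hLdef : ∀ x, L x = (bM.repr x i) • bM i := fun x => rfl
    have hL : ∀ t : Fin m, L (bN t : Fin n → ℤ) ∈ S := by
      intro t
      rw [hLdef, snf t, map_smul, Finsupp.smul_apply, bM.repr_self, smul_eq_mul,
        Finsupp.single_apply]
      by_cases hfi : f t = i
      · rw [if_pos hfi, mul_one, ← hfi, ← snf t]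
        exact (bN t).2
      · rw [if_neg hfi, mul_zero, zero_smul]
        exact S.zero_mem
    have hα' : α = ∑ t, bN.repr ⟨α, hα⟩ t • (bN t : Fin n → ℤ) := by
      have h := congrArg (Subtype.val) (bN.sum_repr ⟨α, hα⟩).symm
      refine h.trans ?_
      rw [Submodule.coe_sum]
      rfl
    rw [← hLdef, hα', map_sum]
    refine Submodule.sum_mem S fun t _ => ?_
    rw [map_smul]
    exact S.smul_mem _ (hL t)
  -- triviality on S × Γ
  have htriv : ∀ α, (∀ γ, σ α γ = 1) → ∀ β, c α β = 1 := by
    intro α hα β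
    rw [hc]
    refine Finset.prod_eq_one fun i _ => Finset.prod_eq_one fun j _ => ?_
    split
    · have h2 : ∀ γ, σ (bM.repr α i • bM i) γ = 1 := key α hα i
      rw [zpow_mul, ← aux_zsmul₁ σ hmul₁ (bM.repr α i), h2, one_zpow]
    · rfl
  -- skew-symmetrization
  have hskew : ∀ α β, c α β * (c β α)⁻¹ = σ α β := by
    intro α β
    have h1 : (c β α)⁻¹ = ∏ i : Fin n, ∏ j : Fin n,
        if i < j then σ (bM i) (bM j) ^ (bM.repr α i * bM.repr β j) else 1 := by
      rw [hc]
      simp only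
      rw [Finset.prod_comm, ← Finset.prod_inv_distrib]
      refine Finset.prod_congr rfl fun i _ => ?_
      rw [← Finset.prod_inv_distrib]
      refine Finset.prod_congr rfl fun j _ => ?_
      rw [apply_ite Inv.inv, inv_one, ← inv_zpow,
        ← aux_skew σ halt hmul₁ hmul₂ (bM j) (bM i), mul_comm (bM.repr β j)]
    rw [hexp α β, h1, hc]
    simp only
    rw [← Finset.prod_mul_distrib]
    refine Finset.prod_congr rfl fun i _ => ?_
    rw [← Finset.prod_mul_distrib]
    refine Finset.prod_congr rfl fun j _ => ?_
    rcases lt_trichotomy i j with h | h | h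
    · rw [if_neg (asymm h), if_pos h, one_mul]
    · subst h
      simp [halt]
    · rw [if_pos h, if_neg (asymm h), mul_one]
  refine ⟨c, ?_, htriv, hskew⟩
  intro α β γ
  rw [hbm₁, hbm₂, ← mul_assoc]
  exact mul_comm _ _
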